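/- arXiv:1106.5130 — 2 statements merged into one kernel-verified Lean document; each statement's English description precedes it below -/
import Mathlib

section
/- Let P = (p_1, p_2, …) be a probability distribution over the positive integers such that lim_{n→∞} p_n·n·(log n)^3 exists and lies in (0, ∞). Then the Shannon entropy H_1(P) < ∞, but H_α(P) = ∞ for every α < 1, so that α_c(P) = 1 and R(P) = [1, ∞). -/
open Filter Topology
open scoped ENNReal

/-- A probability distribution over the positive integers (indexed by `ℕ`):
nonnegative masses summing to `1`. -/
def IsProbDist (p : ℕ → ℝ) : Prop :=
  (∀ n, 0 ≤ p n) ∧ HasSum p 1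

/-- The sum `∑ pₙ^α`, computed in `[0,∞]`, with the convention `0^0 = 0`. -/
noncomputable def renyiSum (p : ℕ → ℝ) (α : ℝ) : ℝ≥0∞ :=
  ∑' n, if p n = 0 then 0 else ENNReal.ofReal (p n ^ α)

/-- The Shannon entropy `H₁(P) = -∑ pₙ log pₙ`, valued in `[0,∞]`. -/
noncomputable def shannonEntropy (p : ℕ → ℝ) : ℝ≥0∞ :=
  ∑' n, ENNReal.ofReal (-(p n * Real.log (p n)))

/-- The Rényi entropy `H_α(P)`, valued in `[0,∞]`: for `α ≠ 1` it is
`(1/(1-α)) log ∑ pₙ^α` (equal to `∞` when the sum diverges), and for `α = 1`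
it is the Shannon entropy. -/
noncomputable def renyiEntropy (p : ℕ → ℝ) (α : ℝ) : ℝ≥0∞ :=
  if α = 1 then shannonEntropy p
  else if renyiSum p α = ∞ then ∞
  else ENNReal.ofReal ((1 - α)⁻¹ * Real.log (renyiSum p α).toReal)

/-- The region of convergence `R(P) = {α ≥ 0 : H_α(P) < ∞}`. -/
def convRegion (p : ℕ → ℝ) : Set ℝ :=
  {α : ℝ | 0 ≤ α ∧ renyiEntropy p α < ∞}

/-- The critical exponent `α_c(P) = inf {α ≥ 0 : H_α(P) < ∞}`. -/
noncomputable def criticalExponent (p : ℕ → ℝ) : ℝ :=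
  sInf (convRegion p)

/-- The total variation distance `d_TV(P,Q) = ∑ |pₙ - qₙ|`. -/
noncomputable def dTV (p q : ℕ → ℝ) : ℝ :=
  ∑' n, |p n - q n|


lemma telesc (m : ℕ) (hm : 3 ≤ m) :
    1 / (((m:ℝ)+1) * Real.log ((m:ℝ)+1) ^ 2) ≤ 1 / Real.log m - 1 / Real.log ((m:ℝ)+1) := by
  have hm3 : (3:ℝ) ≤ m := by exact_mod_cast hm
  have ha : 0 < Real.log m := Real.log_pos (by linarith)
  have hb : 0 < Real.log ((m:ℝ)+1) := Real.log_pos (by linarith)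
  have hab : Real.log m ≤ Real.log ((m:ℝ)+1) := Real.log_le_log (by linarith) (by linarith)
  have hM : (0:ℝ) < (m:ℝ)+1 := by linarith
  have hgap : 1 / ((m:ℝ)+1) ≤ Real.log ((m:ℝ)+1) - Real.log m := by
    have h := Real.log_le_sub_one_of_pos (x := (m:ℝ)/((m:ℝ)+1)) (by positivity)
    have hlog : Real.log ((m:ℝ)/((m:ℝ)+1)) = Real.log m - Real.log ((m:ℝ)+1) :=
      Real.log_div (by linarith) (by linarith)
    rw [hlog] at h
    have : (m:ℝ)/((m:ℝ)+1) - 1 = -(1/((m:ℝ)+1)) := by field_simp; ring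
    linarith [this ▸ h]
  rw [div_sub_div _ _ (ne_of_gt ha) (ne_of_gt hb), div_le_div_iff₀ (by positivity) (by positivity)]
  have hbb : (0:ℝ) ≤ ((m:ℝ)+1) * Real.log ((m:ℝ)+1) ^ 2 := by positivity
  have h1 : (1/((m:ℝ)+1)) * (((m:ℝ)+1) * Real.log ((m:ℝ)+1) ^ 2) = Real.log ((m:ℝ)+1) ^ 2 := by
    field_simp
  have h2 := mul_le_mul_of_nonneg_right hgap hbb
  rw [h1] at h2
  have h3 : Real.log m * Real.log ((m:ℝ)+1) ≤ Real.log ((m:ℝ)+1) ^ 2 := by nlinarith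
  nlinarith

lemma bertrand_summable : Summable (fun n : ℕ => 1 / ((n:ℝ) * Real.log n ^ 2)) := by
  set f : ℕ → ℝ := fun n => 1 / ((n:ℝ) * Real.log n ^ 2) with hf
  have hnonneg : ∀ n, 0 ≤ f n := by
    intro n; apply div_nonneg zero_le_one
    have : (0:ℝ) ≤ (n:ℝ) := Nat.cast_nonneg n
    positivity
  set C : ℝ := f 2 + f 3 + 1 / Real.log 3 with hC
  have key : ∀ N : ℕ, ∑ m ∈ Finset.range (N + 4), f m ≤ C - 1 / Real.log ((N:ℝ)+3) := by
    intro N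
    induction N with
    | zero =>
      have h0 : f 0 = 0 := by simp [hf]
      have h1 : f 1 = 0 := by simp [hf]
      rw [show (0:ℕ)+4 = 4 from rfl, Finset.sum_range_succ, Finset.sum_range_succ,
        Finset.sum_range_succ, Finset.sum_range_one, h0, h1]
      norm_num [hC]
    | succ N ih =>
      rw [show N+1+4 = (N+4)+1 from rfl, Finset.sum_range_succ]
      have step : f (N+4) ≤ 1 / Real.log ((N:ℝ)+3) - 1 / Real.log ((N:ℝ)+4) := by
        have := telesc (N+3) (by omega)
        have hc : ((N+3:ℕ):ℝ) = (N:ℝ)+3 := by push_cast; ring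
        rw [hc] at this
        have hc2 : ((N:ℝ)+3)+1 = (N:ℝ)+4 := by ring
        rw [hc2] at this
        have hc3 : f (N+4) = 1 / (((N:ℝ)+4) * Real.log ((N:ℝ)+4) ^ 2) := by
          simp only [hf]; push_cast; ring_nf
        rw [hc3]; exact this
      have hc4 : ((N+1:ℕ):ℝ)+3 = (N:ℝ)+4 := by push_cast; ring
      rw [hc4]
      linarith
  apply summable_of_sum_range_le hnonneg (c := C)
  intro n
  calc ∑ m ∈ Finset.range n, f m ≤ ∑ m ∈ Finset.range (n + 4), f m := by
        apply Finset.sum_le_sum_of_subset_of_nonneg (Finset.range_subset_range.2 (by omega))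
        intro i _ _; exact hnonneg i
    _ ≤ C - 1 / Real.log ((n:ℝ)+3) := key n
    _ ≤ C := by
        have : (0:ℝ) ≤ 1 / Real.log ((n:ℝ)+3) := by
          apply div_nonneg zero_le_one
          exact (Real.log_pos (by push_cast; linarith [Nat.cast_nonneg (α := ℝ) n])).le
        linarith

set_option maxHeartbeats 1000000 in
/-- If `lim pₙ · n · (log n)³` exists and lies in `(0,∞)`, then
the Shannon entropy `H₁(P) < ∞`, but `H_α(P) = ∞` for every `0 ≤ α < 1`,
so that `α_c(P) = 1` and `R(P) = [1,∞)`. -/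
theorem stmt8 (p : ℕ → ℝ) (hp : IsProbDist p) (L : ℝ) (hL : 0 < L)
    (hlim : Tendsto (fun n : ℕ => p n * n * Real.log n ^ 3) atTop (𝓝 L)) :
    renyiEntropy p 1 < ∞ ∧
    (∀ α : ℝ, 0 ≤ α → α < 1 → renyiEntropy p α = ∞) ∧
    criticalExponent p = 1 ∧ convRegion p = Set.Ici 1 := by
  obtain ⟨hpos, hsum⟩ := hp
  have hple1 : ∀ n, p n ≤ 1 := fun n => le_hasSum hsum n (fun j _ => hpos j)
  -- basic eventual facts
  have E1 : ∀ᶠ n : ℕ in atTop, L / 2 < p n * n * Real.log n ^ 3 :=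
    hlim.eventually (lt_mem_nhds (half_lt_self hL))
  have E2 : ∀ᶠ n : ℕ in atTop, p n * n * Real.log n ^ 3 < 2 * L :=
    hlim.eventually (gt_mem_nhds (by linarith))
  have hcast : Tendsto (fun n : ℕ => (n : ℝ)) atTop atTop := tendsto_natCast_atTop_atTop
  have hlog3 : Tendsto (fun n : ℕ => Real.log n ^ 3 / n) atTop (𝓝 0) := by
    have h := (Real.tendsto_pow_log_div_mul_add_atTop 1 0 3 one_ne_zero).comp hcast
    simpa [Function.comp_def] using h
  have E4 : ∀ᶠ n : ℕ in atTop, Real.log n ^ 3 / n < L / 2 :=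
    hlog3.eventually (gt_mem_nhds (by linarith))
  have E3 : ∀ᶠ n : ℕ in atTop, (3:ℝ) ≤ (n:ℝ) := by
    filter_upwards [eventually_ge_atTop 3] with n hn; exact_mod_cast hn
  -- consolidated pointwise bounds
  have Emain : ∀ᶠ n : ℕ in atTop,
      0 < p n ∧ L / 2 * ((n:ℝ) * Real.log n ^ 3)⁻¹ ≤ p n ∧
      p n ≤ 2 * L * ((n:ℝ) * Real.log n ^ 3)⁻¹ ∧ (3:ℝ) ≤ (n:ℝ) ∧
      2 * Real.log n ^ 3 / L ≤ (n:ℝ) := by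
    filter_upwards [E1, E2, E3, E4] with n h1 h2 h3 h4
    have hn0 : (0:ℝ) < n := by linarith
    have hl1 : (1:ℝ) ≤ Real.log n := by
      calc (1:ℝ) ≤ Real.log 3 := by
            rw [show (1:ℝ) = Real.log (Real.exp 1) from (Real.log_exp 1).symm]
            exact Real.log_le_log (Real.exp_pos 1) (by linarith [Real.exp_one_lt_d9])
        _ ≤ Real.log n := Real.log_le_log (by norm_num) h3
    have hnl : (0:ℝ) < (n:ℝ) * Real.log n ^ 3 := by positivity
    have hppos : 0 < p n := by
      by_contra h
      push_neg at h
      nlinarith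
    refine ⟨hppos, ?_, ?_, h3, ?_⟩
    · have hle : L / 2 ≤ p n * ((n:ℝ) * Real.log n ^ 3) := by nlinarith
      calc L / 2 * ((n:ℝ) * Real.log n ^ 3)⁻¹
          ≤ (p n * ((n:ℝ) * Real.log n ^ 3)) * ((n:ℝ) * Real.log n ^ 3)⁻¹ :=
            mul_le_mul_of_nonneg_right hle (inv_nonneg.2 hnl.le)
        _ = p n := by field_simp
    · have hle : p n * ((n:ℝ) * Real.log n ^ 3) ≤ 2 * L := by nlinarith
      calc p n = (p n * ((n:ℝ) * Real.log n ^ 3)) * ((n:ℝ) * Real.log n ^ 3)⁻¹ := by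
            field_simp
        _ ≤ 2 * L * ((n:ℝ) * Real.log n ^ 3)⁻¹ :=
            mul_le_mul_of_nonneg_right hle (inv_nonneg.2 hnl.le)
    · have hlt : Real.log (n:ℝ) ^ 3 < L / 2 * (n:ℝ) := (div_lt_iff₀ hn0).1 h4
      rw [div_le_iff₀ hL]
      nlinarith
  -- Shannon entropy finite
  have hshannon : shannonEntropy p < ⊤ := by
    set f : ℕ → ℝ := fun n => -(p n * Real.log (p n)) with hfdef
    have Ebound : ∀ᶠ n : ℕ in atTop, |f n| ≤ 4 * L * (1 / ((n:ℝ) * Real.log n ^ 2)) := by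
      filter_upwards [Emain] with n ⟨hppos, hlow, hup, h3, h4⟩
      have hn0 : (0:ℝ) < n := by linarith
      have hl1 : (1:ℝ) ≤ Real.log n := by
        calc (1:ℝ) ≤ Real.log 3 := by
              rw [show (1:ℝ) = Real.log (Real.exp 1) from (Real.log_exp 1).symm]
              exact Real.log_le_log (Real.exp_pos 1) (by linarith [Real.exp_one_lt_d9])
          _ ≤ Real.log n := Real.log_le_log (by norm_num) h3
      have hl0 : (0:ℝ) < Real.log n := by linarith
      have hnl : (0:ℝ) < (n:ℝ) * Real.log n ^ 3 := by positivity
      have hlognp : Real.log (p n) ≤ 0 := Real.log_nonpos hppos.le (hple1 n)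
      have hfnn : 0 ≤ f n := by
        simp only [hfdef]
        nlinarith [mul_nonneg hppos.le (neg_nonneg.2 hlognp)]
      have hneg : -Real.log (p n) ≤ 2 * Real.log n := by
        have h1 : -Real.log (p n) = Real.log (p n)⁻¹ := (Real.log_inv _).symm
        rw [h1]
        have hinv : (p n)⁻¹ ≤ (n:ℝ) * (n:ℝ) := by
          have h2 : (p n)⁻¹ ≤ ((n:ℝ) * Real.log n ^ 3) * (2 / L) := by
            rw [← one_div, div_le_iff₀ hppos]
            have := mul_le_mul_of_nonneg_left hlow (by positivity : (0:ℝ) ≤ ((n:ℝ) * Real.log n ^ 3) * (2 / L))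
            calc (1:ℝ) = ((n:ℝ) * Real.log n ^ 3) * (2/L) * (L/2 * ((n:ℝ) * Real.log n ^ 3)⁻¹) := by
                  field_simp
              _ ≤ _ := this
          calc (p n)⁻¹ ≤ ((n:ℝ) * Real.log n ^ 3) * (2 / L) := h2
            _ = (n:ℝ) * (2 * Real.log n ^ 3 / L) := by ring
            _ ≤ (n:ℝ) * (n:ℝ) := by
                apply mul_le_mul_of_nonneg_left h4 hn0.le
        calc Real.log (p n)⁻¹ ≤ Real.log ((n:ℝ) * (n:ℝ)) :=
              Real.log_le_log (by positivity) hinv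
          _ = Real.log n + Real.log n := Real.log_mul hn0.ne' hn0.ne'
          _ = 2 * Real.log n := by ring
      have : f n ≤ 4 * L * (1 / ((n:ℝ) * Real.log n ^ 2)) := by
        have hf : f n = p n * (-Real.log (p n)) := by simp only [hfdef]; ring
        rw [hf]
        calc p n * (-Real.log (p n)) ≤ (2 * L * ((n:ℝ) * Real.log n ^ 3)⁻¹) * (2 * Real.log n) := by
              apply mul_le_mul hup hneg (by nlinarith [Real.log_nonpos hppos.le (hple1 n)]) (by positivity)
          _ = 4 * L * (1 / ((n:ℝ) * Real.log n ^ 2)) := by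
              field_simp
              ring
      rwa [abs_of_nonneg hfnn]
    obtain ⟨N, hN⟩ := eventually_atTop.mp Ebound
    have hmaj : Summable (fun n : ℕ => 4 * L * (1 / ((n:ℝ) * Real.log n ^ 2))) :=
      bertrand_summable.mul_left (4 * L)
    have hshift : Summable (fun n : ℕ => 4 * L * (1 / (((n + N : ℕ):ℝ) * Real.log ((n + N : ℕ):ℝ) ^ 2))) :=
      (summable_nat_add_iff N).2 hmaj
    have habs' : Summable (fun n : ℕ => |f (n + N)|) :=
      Summable.of_nonneg_of_le (fun n => abs_nonneg _) (fun n => hN (n + N) (Nat.le_add_left N n)) hshift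
    have habs : Summable (fun n : ℕ => |f n|) := (summable_nat_add_iff N).1 habs'
    calc shannonEntropy p = ∑' n, ENNReal.ofReal (f n) := rfl
      _ ≤ ∑' n, ENNReal.ofReal |f n| :=
          ENNReal.tsum_le_tsum (fun n => ENNReal.ofReal_le_ofReal (le_abs_self _))
      _ = ENNReal.ofReal (∑' n, |f n|) :=
          (ENNReal.ofReal_tsum_of_nonneg (fun n => abs_nonneg _) habs).symm
      _ < ⊤ := ENNReal.ofReal_lt_top
  -- divergence for α < 1
  have hdiv : ∀ α : ℝ, 0 ≤ α → α < 1 → renyiSum p α = ⊤ := by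
    intro α hα0 hα1
    set β : ℝ := (1 + α) / 2 with hβdef
    have hβ0 : 0 < β := by unfold β; linarith
    have hβ1 : β < 1 := by unfold β; linarith
    set c : ℝ := (L / 2) ^ α with hcdef
    have hc : 0 < c := Real.rpow_pos_of_pos (by linarith) α
    have Elb : ∀ᶠ n : ℕ in atTop, p n ≠ 0 ∧ c * (((n:ℝ) ^ β)⁻¹) ≤ p n ^ α := by
      rcases eq_or_lt_of_le hα0 with h0 | h0
      · -- α = 0
        filter_upwards [Emain] with n ⟨hppos, _, _, h3, _⟩
        refine ⟨hppos.ne', ?_⟩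
        rw [← h0, Real.rpow_zero]
        have : (1:ℝ) ≤ (n:ℝ) ^ β := Real.one_le_rpow (by linarith) hβ0.le
        have hc1 : c = 1 := by rw [hcdef, ← h0, Real.rpow_zero]
        rw [hc1, one_mul]
        exact inv_le_one_of_one_le₀ this
      · -- α > 0
        set ε : ℝ := (1 - α) / (2 * α) with hεdef
        have hε : 0 < ε := by rw [hεdef]; exact div_pos (by linarith) (by linarith)
        have Elog : ∀ᶠ x : ℝ in atTop, Real.log x ^ (3:ℕ) ≤ x ^ ε := by
          have h := (isLittleO_log_rpow_rpow_atTop (3:ℝ) hε).bound one_pos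
          filter_upwards [h, eventually_ge_atTop (1:ℝ)] with x hx hx1
          have hlx : (0:ℝ) ≤ Real.log x := Real.log_nonneg hx1
          have hrx : Real.log x ^ ((3:ℕ):ℝ) = Real.log x ^ (3:ℕ) := Real.rpow_natCast _ 3
          rw [Real.norm_eq_abs, Real.norm_eq_abs] at hx
          have hxpos : (0:ℝ) < x ^ ε := Real.rpow_pos_of_pos (by linarith) ε
          calc Real.log x ^ (3:ℕ) = Real.log x ^ ((3:ℕ):ℝ) := hrx.symm
            _ ≤ |Real.log x ^ ((3:ℕ):ℝ)| := le_abs_self _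
            _ ≤ 1 * |x ^ ε| := by exact_mod_cast hx
            _ = x ^ ε := by rw [one_mul, abs_of_pos hxpos]
        have Elog' : ∀ᶠ n : ℕ in atTop, Real.log n ^ (3:ℕ) ≤ (n:ℝ) ^ ε :=
          hcast.eventually Elog
        filter_upwards [Emain, Elog'] with n ⟨hppos, hlow, _, h3, _⟩ hle
        have hn0 : (0:ℝ) < n := by linarith
        have hl1 : (1:ℝ) ≤ Real.log n := by
          calc (1:ℝ) ≤ Real.log 3 := by
                rw [show (1:ℝ) = Real.log (Real.exp 1) from (Real.log_exp 1).symm]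
                exact Real.log_le_log (Real.exp_pos 1) (by linarith [Real.exp_one_lt_d9])
            _ ≤ Real.log n := Real.log_le_log (by norm_num) h3
        have hnl : (0:ℝ) < (n:ℝ) * Real.log n ^ 3 := by positivity
        refine ⟨hppos.ne', ?_⟩
        have step1 : (L / 2 * ((n:ℝ) * Real.log n ^ 3)⁻¹) ^ α ≤ p n ^ α :=
          Real.rpow_le_rpow (by positivity) hlow hα0
        have step2 : c * (((n:ℝ) ^ β)⁻¹) ≤ (L / 2 * ((n:ℝ) * Real.log n ^ 3)⁻¹) ^ α := by
          rw [Real.mul_rpow (by linarith) (by positivity),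
            Real.inv_rpow hnl.le]
          apply mul_le_mul_of_nonneg_left _ hc.le
          rw [inv_le_inv₀ (Real.rpow_pos_of_pos hn0 β) (Real.rpow_pos_of_pos hnl α)]
          calc ((n:ℝ) * Real.log n ^ 3) ^ α ≤ ((n:ℝ) * (n:ℝ) ^ ε) ^ α := by
                apply Real.rpow_le_rpow hnl.le _ hα0
                exact mul_le_mul_of_nonneg_left hle hn0.le
            _ = ((n:ℝ) ^ (1 + ε)) ^ α := by
                rw [Real.rpow_add hn0, Real.rpow_one]
            _ = (n:ℝ) ^ ((1 + ε) * α) := by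
                rw [Real.rpow_mul hn0.le]
            _ = (n:ℝ) ^ β := by
                congr 1
                rw [hεdef, hβdef]
                field_simp
                ring
        linarith
    obtain ⟨N, hN⟩ := eventually_atTop.mp Elb
    -- the comparison series diverges
    have hnots : ¬ Summable (fun n : ℕ => (((n:ℝ)) ^ β)⁻¹) := by
      rw [Real.summable_nat_rpow_inv]
      linarith
    have htop : (∑' n : ℕ, ENNReal.ofReal (c * ((((n + N : ℕ):ℝ)) ^ β)⁻¹)) = ⊤ := by
      by_contra h
      have hs : Summable (fun n : ℕ => (c * ((((n + N : ℕ):ℝ)) ^ β)⁻¹).toNNReal) :=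
        ENNReal.tsum_coe_ne_top_iff_summable.1 h
      have hs2 : Summable (fun n : ℕ => c * ((((n + N : ℕ):ℝ)) ^ β)⁻¹) := by
        have := NNReal.summable_coe.2 hs
        refine this.congr fun n => ?_
        exact Real.coe_toNNReal _ (by positivity)
      have hs3 : Summable (fun n : ℕ => ((((n + N : ℕ):ℝ)) ^ β)⁻¹) :=
        (summable_mul_left_iff hc.ne').1 hs2
      exact hnots ((summable_nat_add_iff N).1 hs3)
    rw [eq_top_iff, ← htop]
    calc (∑' n : ℕ, ENNReal.ofReal (c * ((((n + N : ℕ):ℝ)) ^ β)⁻¹))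
        ≤ ∑' n : ℕ, (if p (n + N) = 0 then 0 else ENNReal.ofReal (p (n + N) ^ α)) := by
          apply ENNReal.tsum_le_tsum
          intro n
          obtain ⟨hne, hlb⟩ := hN (n + N) (Nat.le_add_left N n)
          rw [if_neg hne]
          exact ENNReal.ofReal_le_ofReal hlb
      _ ≤ renyiSum p α :=
          ENNReal.tsum_comp_le_tsum_of_injective (add_left_injective N) _
  -- finiteness for α ≥ 1
  have hfin : ∀ α : ℝ, 1 ≤ α → renyiEntropy p α < ⊤ := by
    intro α hα
    rcases eq_or_lt_of_le hα with h1 | h1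
    · rw [← h1]; simpa [renyiEntropy] using hshannon
    · have hne1 : α ≠ 1 := (ne_of_gt h1)
      have hsumle : renyiSum p α ≤ 1 := by
        calc renyiSum p α ≤ ∑' n, ENNReal.ofReal (p n) := by
              apply ENNReal.tsum_le_tsum
              intro n
              split_ifs with h
              · exact zero_le
              · apply ENNReal.ofReal_le_ofReal
                have hpn : 0 < p n := lt_of_le_of_ne (hpos n) (Ne.symm h)
                calc p n ^ α ≤ p n ^ (1:ℝ) :=
                      Real.rpow_le_rpow_of_exponent_ge hpn (hple1 n) hα
                  _ = p n := Real.rpow_one _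
          _ = ENNReal.ofReal (∑' n, p n) :=
              (ENNReal.ofReal_tsum_of_nonneg hpos hsum.summable).symm
          _ = 1 := by rw [hsum.tsum_eq]; norm_num
      have hnetop : renyiSum p α ≠ ⊤ := ne_top_of_le_ne_top (by norm_num) hsumle
      simp only [renyiEntropy, if_neg hne1, if_neg hnetop]
      exact ENNReal.ofReal_lt_top
  have hEntDiv : ∀ α : ℝ, 0 ≤ α → α < 1 → renyiEntropy p α = ∞ := by
    intro α h0 h1
    simp only [renyiEntropy, if_neg (ne_of_lt h1), if_pos (hdiv α h0 h1)]
  have hregion : convRegion p = Set.Ici 1 := by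
    ext α
    simp only [convRegion, Set.mem_setOf_eq, Set.mem_Ici]
    constructor
    · rintro ⟨h0, hlt⟩
      by_contra h
      push_neg at h
      rw [hEntDiv α h0 h] at hlt
      exact lt_irrefl _ hlt
    · intro h1
      exact ⟨le_trans zero_le_one h1, hfin α h1⟩
  refine ⟨by simpa [renyiEntropy] using hshannon, hEntDiv, ?_, hregion⟩
  rw [criticalExponent, hregion, csInf_Ici]
end

section
/- Let P_1, …, P_K be probability distributions over the positive integers and let T = Σ_{k=1}^K λ_k P_k be their mixture, where λ_k > 0 and Σ_{k=1}^K λ_k = 1. Then α_c(T) = max_{1 ≤ k ≤ K} α_c(P_k) and R(T) = ∩_{k=1}^K R(P_k). -/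
open Filter Topology
open scoped ENNReal

lemma prob_le_one {p : ℕ → ℝ} (hp : IsProbDist p) (n : ℕ) : p n ≤ 1 :=
  le_hasSum hp.2 n fun m _ => hp.1 m

lemma tsum_ofReal_eq_one {p : ℕ → ℝ} (hp : IsProbDist p) :
    ∑' n, ENNReal.ofReal (p n) = 1 := by
  rw [← ENNReal.ofReal_tsum_of_nonneg hp.1 hp.2.summable, hp.2.tsum_eq, ENNReal.ofReal_one]

lemma renyiEntropy_lt_top_iff_one {p : ℕ → ℝ} :
    renyiEntropy p 1 < ∞ ↔ shannonEntropy p < ∞ := by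
  simp [renyiEntropy]

lemma renyiEntropy_lt_top_iff {p : ℕ → ℝ} {α : ℝ} (h : α ≠ 1) :
    renyiEntropy p α < ∞ ↔ renyiSum p α < ∞ := by
  rw [renyiEntropy, if_neg h]
  by_cases h2 : renyiSum p α = ∞ <;> simp [h2, lt_top_iff_ne_top]

lemma negMulLog_le_rpow {p α : ℝ} (hp : 0 < p) (hα : α < 1) :
    Real.negMulLog p ≤ (1 - α)⁻¹ * p ^ α := by
  set s := 1 - α with hsdef
  have hs0 : 0 < s := by simp [hsdef]; linarith
  have h1 : Real.log (p ^ (-s)) ≤ p ^ (-s) := by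
    have := Real.log_le_sub_one_of_pos (Real.rpow_pos_of_pos hp (-s))
    linarith
  rw [Real.log_rpow hp] at h1
  have h4 : p * p ^ (-s) = p ^ α := by
    nth_rewrite 1 [← Real.rpow_one p]
    rw [← Real.rpow_add hp]
    norm_num [hsdef]
  have h5 : p * (-s * Real.log p) ≤ p * p ^ (-s) :=
    mul_le_mul_of_nonneg_left h1 hp.le
  rw [h4] at h5
  have h6 : s⁻¹ * (p * (-s * Real.log p)) = -p * Real.log p := by
    field_simp
  have h7 := mul_le_mul_of_nonneg_left h5 (inv_nonneg.mpr hs0.le)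
  rw [h6] at h7
  rw [Real.negMulLog]
  exact h7

lemma renyiSum_mono {p : ℕ → ℝ} (hp : IsProbDist p) {α β : ℝ} (hab : α ≤ β) :
    renyiSum p β ≤ renyiSum p α := by
  refine ENNReal.tsum_le_tsum fun n => ?_
  by_cases h : p n = 0
  · simp [h]
  · simp only [h, if_neg, ite_false]
    exact ENNReal.ofReal_le_ofReal <|
      Real.rpow_le_rpow_of_exponent_ge (lt_of_le_of_ne (hp.1 n) (Ne.symm h))
        (prob_le_one hp n) hab

lemma renyiSum_one {p : ℕ → ℝ} (hp : IsProbDist p) : renyiSum p 1 = 1 := by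
  rw [← tsum_ofReal_eq_one hp, renyiSum]
  refine tsum_congr fun n => ?_
  by_cases h : p n = 0 <;> simp [h]

lemma renyiSum_le_one {p : ℕ → ℝ} (hp : IsProbDist p) {β : ℝ} (hβ : 1 ≤ β) :
    renyiSum p β ≤ 1 := (renyiSum_mono hp hβ).trans (renyiSum_one hp).le

lemma shannon_le_renyiSum {p : ℕ → ℝ} (hp : IsProbDist p) {α : ℝ} (hα : α < 1) :
    shannonEntropy p ≤ ENNReal.ofReal (1 - α)⁻¹ * renyiSum p α := by
  rw [renyiSum, ← ENNReal.tsum_mul_left]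
  refine ENNReal.tsum_le_tsum fun n => ?_
  by_cases h : p n = 0
  · simp [h]
  · rw [if_neg h, ← ENNReal.ofReal_mul (inv_nonneg.mpr (by linarith))]
    refine ENNReal.ofReal_le_ofReal ?_
    have := negMulLog_le_rpow (lt_of_le_of_ne (hp.1 n) (Ne.symm h)) hα
    rw [Real.negMulLog] at this
    linarith

lemma convRegion_upward {p : ℕ → ℝ} (hp : IsProbDist p) {α β : ℝ}
    (hα : α ∈ convRegion p) (hab : α ≤ β) : β ∈ convRegion p := by
  obtain ⟨h0, hfin⟩ := hα
  refine ⟨le_trans h0 hab, ?_⟩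
  rcases lt_trichotomy β 1 with hβ | hβ | hβ
  · have hα1 : α ≠ 1 := by linarith
    rw [renyiEntropy_lt_top_iff hβ.ne]
    rw [renyiEntropy_lt_top_iff hα1] at hfin
    exact lt_of_le_of_lt (renyiSum_mono hp hab) hfin
  · subst hβ
    rcases eq_or_lt_of_le hab with rfl | hα1
    · exact hfin
    · rw [renyiEntropy_lt_top_iff_one]
      rw [renyiEntropy_lt_top_iff hα1.ne] at hfin
      refine lt_of_le_of_lt (shannon_le_renyiSum hp hα1) ?_
      exact ENNReal.mul_lt_top ENNReal.ofReal_lt_top hfin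
  · rw [renyiEntropy_lt_top_iff hβ.ne']
    exact lt_of_le_of_lt (renyiSum_le_one hp hβ.le) (by norm_num)

lemma two_mem_convRegion {p : ℕ → ℝ} (hp : IsProbDist p) : (2 : ℝ) ∈ convRegion p := by
  refine ⟨by norm_num, ?_⟩
  rw [renyiEntropy_lt_top_iff (by norm_num)]
  exact lt_of_le_of_lt (renyiSum_le_one hp (by norm_num)) (by norm_num)

lemma convRegion_subset {p : ℕ → ℝ} : convRegion p ⊆ Set.Ici (0 : ℝ) := fun _ h => h.1

lemma criticalExponent_nonneg {p : ℕ → ℝ} (hp : IsProbDist p) :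
    0 ≤ criticalExponent p :=
  le_csInf ⟨2, two_mem_convRegion hp⟩ fun _ h => h.1

-- sInf of intersection of upward-closed sets in [0,∞) each containing 2
lemma sInf_iInter_eq {K : ℕ} (hK : 0 < K) (S : Fin K → Set ℝ)
    (hsub : ∀ k, S k ⊆ Set.Ici (0 : ℝ)) (hne : ∀ k, (2 : ℝ) ∈ S k)
    (hup : ∀ k, ∀ {a b : ℝ}, a ∈ S k → a ≤ b → b ∈ S k) :
    sInf (⋂ k, S k) = ⨆ k, sInf (S k) := by
  haveI : Nonempty (Fin K) := ⟨⟨0, hK⟩⟩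
  have hbdd : ∀ k, BddBelow (S k) := fun k => ⟨0, fun x hx => hsub k hx⟩
  have hIne : ((⋂ k, S k) : Set ℝ).Nonempty := ⟨2, Set.mem_iInter.mpr hne⟩
  have hIbdd : BddBelow (⋂ k, S k) := ⟨0, fun x hx => hsub ⟨0, hK⟩ (Set.mem_iInter.mp hx _)⟩
  have hbddsup : BddAbove (Set.range fun k => sInf (S k)) := Set.finite_range _ |>.bddAbove
  apply le_antisymm
  · -- sInf ⋂ ≤ ⨆
    have hsub2 : Set.Ioi (⨆ k, sInf (S k)) ⊆ ⋂ k, S k := by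
      intro x hx
      refine Set.mem_iInter.mpr fun k => ?_
      have h1 : sInf (S k) < x := lt_of_le_of_lt (le_ciSup hbddsup k) hx
      obtain ⟨y, hy, hyx⟩ := exists_lt_of_csInf_lt ⟨2, hne k⟩ h1
      exact hup k hy hyx.le
    calc sInf (⋂ k, S k) ≤ sInf (Set.Ioi (⨆ k, sInf (S k))) :=
          csInf_le_csInf hIbdd ⟨_, Set.mem_Ioi.mpr (lt_add_one _)⟩ hsub2
      _ = _ := csInf_Ioi
  · exact ciSup_le fun k => csInf_le_csInf (hbdd k) hIne (Set.iInter_subset S k)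

section Mixture

variable {K : ℕ} {P : Fin K → ℕ → ℝ} {lam : Fin K → ℝ}

lemma lam_le_one (hlam : ∀ k, 0 < lam k) (hsum : ∑ k, lam k = 1) (k : Fin K) :
    lam k ≤ 1 := hsum ▸ Finset.single_le_sum (fun j _ => (hlam j).le) (Finset.mem_univ k)

lemma mix_isProbDist (hP : ∀ k, IsProbDist (P k)) (hlam : ∀ k, 0 < lam k)
    (hsum : ∑ k, lam k = 1) : IsProbDist (fun n => ∑ k, lam k * P k n) := by
  constructor
  · exact fun n => Finset.sum_nonneg fun k _ => mul_nonneg (hlam k).le ((hP k).1 n)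
  · have h : HasSum (fun n => ∑ k, lam k * P k n) (∑ k, lam k * 1) :=
      hasSum_sum fun k _ => (hP k).2.mul_left (lam k)
    simpa [hsum] using h
end Mixture

section Mixture2
variable {K : ℕ} {P : Fin K → ℕ → ℝ} {lam : Fin K → ℝ}
  (hP : ∀ k, IsProbDist (P k)) (hlam : ∀ k, 0 < lam k) (hsum : ∑ k, lam k = 1)
include hP hlam

lemma mix_term_le (k : Fin K) (n : ℕ) : lam k * P k n ≤ ∑ j, lam j * P j n :=
  Finset.single_le_sum (fun j _ => mul_nonneg (hlam j).le ((hP j).1 n)) (Finset.mem_univ k)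

lemma mix_eq_zero_iff (n : ℕ) : (∑ k, lam k * P k n) = 0 ↔ ∀ k, P k n = 0 := by
  rw [Finset.sum_eq_zero_iff_of_nonneg fun k _ => mul_nonneg (hlam k).le ((hP k).1 n)]
  constructor
  · intro h k
    have := h k (Finset.mem_univ k)
    rcases mul_eq_zero.mp this with h' | h'
    · exact absurd h' (hlam k).ne'
    · exact h'
  · intro h k _
    rw [h k, mul_zero]

lemma renyiSum_comp_le (k : Fin K) {α : ℝ} (hα : 0 ≤ α) :
    renyiSum (P k) α ≤ ENNReal.ofReal ((lam k) ^ (-α)) *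
      renyiSum (fun n => ∑ j, lam j * P j n) α := by
  rw [renyiSum, renyiSum, ← ENNReal.tsum_mul_left]
  refine ENNReal.tsum_le_tsum fun n => ?_
  by_cases h : P k n = 0
  · simp [h]
  · have hpk : 0 < P k n := lt_of_le_of_ne ((hP k).1 n) (Ne.symm h)
    have hT : 0 < ∑ j, lam j * P j n :=
      lt_of_lt_of_le (mul_pos (hlam k) hpk) (mix_term_le hP hlam k n)
    rw [if_neg h, if_neg hT.ne', ← ENNReal.ofReal_mul (Real.rpow_nonneg (hlam k).le _)]
    refine ENNReal.ofReal_le_ofReal ?_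
    have h1 : (lam k * P k n) ^ α ≤ (∑ j, lam j * P j n) ^ α :=
      Real.rpow_le_rpow (mul_nonneg (hlam k).le hpk.le) (mix_term_le hP hlam k n) hα
    rw [Real.mul_rpow (hlam k).le hpk.le] at h1
    have h2 : lam k ^ (-α) * (lam k ^ α * P k n ^ α) = P k n ^ α := by
      rw [← mul_assoc, ← Real.rpow_add (hlam k)]
      simp
    calc P k n ^ α = lam k ^ (-α) * (lam k ^ α * P k n ^ α) := h2.symm
      _ ≤ lam k ^ (-α) * (∑ j, lam j * P j n) ^ α := by
          refine mul_le_mul_of_nonneg_left ?_ (Real.rpow_nonneg (hlam k).le _)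
          exact h1

include hsum in
lemma renyiSum_mix_le (hK : 0 < K) {α : ℝ} (hα : 0 ≤ α) :
    renyiSum (fun n => ∑ j, lam j * P j n) α ≤
      ENNReal.ofReal ((K : ℝ) ^ α) * ∑ k, renyiSum (P k) α := by
  haveI : Nonempty (Fin K) := ⟨⟨0, hK⟩⟩
  set f : Fin K → ℕ → ℝ≥0∞ := fun k n => if P k n = 0 then 0 else ENNReal.ofReal (P k n ^ α)
    with hf
  have key : ∀ n, (if (∑ j, lam j * P j n) = 0 then 0
      else ENNReal.ofReal ((∑ j, lam j * P j n) ^ α))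
      ≤ ENNReal.ofReal ((K : ℝ) ^ α) * ∑ k, f k n := by
    intro n
    by_cases hT : (∑ j, lam j * P j n) = 0
    · simp [hT]
    · rw [if_neg hT]
      obtain ⟨k0, -, hk0⟩ := Finset.exists_mem_eq_sup' Finset.univ_nonempty (fun k => P k n)
      have hk0ge : ∀ j, P j n ≤ P k0 n := fun j =>
        hk0 ▸ Finset.le_sup' (fun k => P k n) (Finset.mem_univ j)
      have hTpos : 0 < ∑ j, lam j * P j n :=
        lt_of_le_of_ne (Finset.sum_nonneg fun j _ => mul_nonneg (hlam j).le ((hP j).1 n))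
          (Ne.symm hT)
      obtain ⟨k1, hk1⟩ : ∃ k, P k n ≠ 0 := by
        by_contra hc
        push_neg at hc
        exact hT ((mix_eq_zero_iff hP hlam n).mpr hc)
      have hm_pos : 0 < P k0 n :=
        lt_of_lt_of_le (lt_of_le_of_ne ((hP k1).1 n) (Ne.symm hk1)) (hk0ge k1)
      have hk0ne : P k0 n ≠ 0 := hm_pos.ne'
      have hTle : (∑ j, lam j * P j n) ≤ (K : ℝ) * P k0 n := by
        calc ∑ j, lam j * P j n ≤ ∑ _j : Fin K, P k0 n :=
              Finset.sum_le_sum fun j _ =>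
                le_trans (mul_le_of_le_one_left ((hP j).1 n) (lam_le_one hlam hsum j))
                  (hk0ge j)
          _ = (K : ℝ) * P k0 n := by
              simp [Finset.sum_const, nsmul_eq_mul]
      have h1 : (∑ j, lam j * P j n) ^ α ≤ ((K : ℝ) * P k0 n) ^ α :=
        Real.rpow_le_rpow hTpos.le hTle hα
      rw [Real.mul_rpow (by positivity) hm_pos.le] at h1
      calc ENNReal.ofReal ((∑ j, lam j * P j n) ^ α)
          ≤ ENNReal.ofReal ((K : ℝ) ^ α * P k0 n ^ α) := ENNReal.ofReal_le_ofReal h1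
        _ = ENNReal.ofReal ((K : ℝ) ^ α) * ENNReal.ofReal (P k0 n ^ α) :=
            ENNReal.ofReal_mul (by positivity)
        _ ≤ ENNReal.ofReal ((K : ℝ) ^ α) * ∑ k, f k n := by
            refine mul_le_mul_right ?_ _
            have heq : f k0 n = ENNReal.ofReal (P k0 n ^ α) := by
              rw [hf]
              simp only [if_neg hk0ne]
            rw [← heq]
            exact Finset.single_le_sum (f := fun k => f k n) (fun k _ => zero_le)
              (Finset.mem_univ k0)
  have hswap : ∑' n, ∑ k, f k n = ∑ k, renyiSum (P k) α :=
    (hasSum_sum fun k _ => ENNReal.summable.hasSum).tsum_eq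
  calc renyiSum (fun n => ∑ j, lam j * P j n) α
      ≤ ∑' n, ENNReal.ofReal ((K : ℝ) ^ α) * ∑ k, f k n := ENNReal.tsum_le_tsum key
    _ = ENNReal.ofReal ((K : ℝ) ^ α) * ∑' n, ∑ k, f k n := ENNReal.tsum_mul_left
    _ = _ := by rw [hswap]

end Mixture2

lemma shannon_eq_negMulLog (p : ℕ → ℝ) :
    shannonEntropy p = ∑' n, ENNReal.ofReal (Real.negMulLog (p n)) := by
  simp [shannonEntropy, Real.negMulLog_eq_neg]

lemma negMulLog_sum_le {ι : Type*} {s : Finset ι} {a : ι → ℝ} (ha : ∀ i ∈ s, 0 ≤ a i) :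
    Real.negMulLog (∑ i ∈ s, a i) ≤ ∑ i ∈ s, Real.negMulLog (a i) := by
  have h1 : (∑ i ∈ s, a i * (-Real.log (∑ j ∈ s, a j))) = Real.negMulLog (∑ i ∈ s, a i) := by
    rw [← Finset.sum_mul, Real.negMulLog]
    ring
  refine le_trans (le_of_eq h1.symm) (Finset.sum_le_sum fun i hi => ?_)
  rcases eq_or_lt_of_le (ha i hi) with h | h
  · simp [← h, Real.negMulLog]
  · have hle : a i ≤ ∑ j ∈ s, a j := Finset.single_le_sum ha hi
    have := Real.log_le_log h hle
    rw [Real.negMulLog]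
    nlinarith

section Mixture3
variable {K : ℕ} {P : Fin K → ℕ → ℝ} {lam : Fin K → ℝ}
  (hP : ∀ k, IsProbDist (P k)) (hlam : ∀ k, 0 < lam k) (hsum : ∑ k, lam k = 1)
include hP hlam hsum

lemma shannon_comp_le (k : Fin K) :
    shannonEntropy (P k) ≤
      ENNReal.ofReal (lam k)⁻¹ * shannonEntropy (fun n => ∑ j, lam j * P j n) := by
  rw [shannon_eq_negMulLog, shannon_eq_negMulLog, ← ENNReal.tsum_mul_left]
  refine ENNReal.tsum_le_tsum fun n => ?_
  rw [← ENNReal.ofReal_mul (inv_nonneg.mpr (hlam k).le)]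
  refine ENNReal.ofReal_le_ofReal ?_
  have jensen : ∑ j, lam j * Real.negMulLog (P j n)
      ≤ Real.negMulLog (∑ j, lam j * P j n) := by
    have := Real.concaveOn_negMulLog.le_map_sum (t := Finset.univ) (w := lam)
      (p := fun j => P j n) (fun j _ => (hlam j).le) hsum
      (fun j _ => Set.mem_Ici.mpr ((hP j).1 n))
    simpa [smul_eq_mul] using this
  have h2 : lam k * Real.negMulLog (P k n) ≤ ∑ j, lam j * Real.negMulLog (P j n) :=
    Finset.single_le_sum
      (fun j _ => mul_nonneg (hlam j).le
        (Real.negMulLog_nonneg ((hP j).1 n) (prob_le_one (hP j) n)))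
      (Finset.mem_univ k)
  have h3 := h2.trans jensen
  have h4 := mul_le_mul_of_nonneg_left h3 (inv_nonneg.mpr (hlam k).le)
  rw [← mul_assoc, inv_mul_cancel₀ (hlam k).ne', one_mul] at h4
  exact h4

lemma shannon_mix_le :
    shannonEntropy (fun n => ∑ j, lam j * P j n) ≤
      ∑ k, (ENNReal.ofReal (lam k) * shannonEntropy (P k)
        + ENNReal.ofReal (Real.negMulLog (lam k))) := by
  rw [shannon_eq_negMulLog]
  set g : Fin K → ℕ → ℝ≥0∞ := fun k n =>
    ENNReal.ofReal (lam k * Real.negMulLog (P k n))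
      + ENNReal.ofReal (P k n * Real.negMulLog (lam k)) with hg
  have key : ∀ n, ENNReal.ofReal (Real.negMulLog (∑ j, lam j * P j n)) ≤ ∑ k, g k n := by
    intro n
    have hnn : ∀ k, 0 ≤ lam k * Real.negMulLog (P k n) := fun k =>
      mul_nonneg (hlam k).le (Real.negMulLog_nonneg ((hP k).1 n) (prob_le_one (hP k) n))
    have hnn2 : ∀ k, 0 ≤ P k n * Real.negMulLog (lam k) := fun k =>
      mul_nonneg ((hP k).1 n) (Real.negMulLog_nonneg (hlam k).le (lam_le_one hlam hsum k))
    have hr : Real.negMulLog (∑ j, lam j * P j n)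
        ≤ ∑ k, (lam k * Real.negMulLog (P k n) + P k n * Real.negMulLog (lam k)) := by
      refine le_trans (negMulLog_sum_le fun j _ => mul_nonneg (hlam j).le ((hP j).1 n)) ?_
      refine le_of_eq (Finset.sum_congr rfl fun j _ => ?_)
      rw [Real.negMulLog_mul]
      ring
    calc ENNReal.ofReal (Real.negMulLog (∑ j, lam j * P j n))
        ≤ ENNReal.ofReal (∑ k, (lam k * Real.negMulLog (P k n)
            + P k n * Real.negMulLog (lam k))) := ENNReal.ofReal_le_ofReal hr
      _ = ∑ k, ENNReal.ofReal (lam k * Real.negMulLog (P k n)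
            + P k n * Real.negMulLog (lam k)) := by
          rw [ENNReal.ofReal_sum_of_nonneg fun k _ => add_nonneg (hnn k) (hnn2 k)]
      _ = ∑ k, g k n := by
          refine Finset.sum_congr rfl fun k _ => ?_
          rw [hg, ENNReal.ofReal_add (hnn k) (hnn2 k)]
  have hterm : ∀ k, ∑' n, g k n
      = ENNReal.ofReal (lam k) * shannonEntropy (P k)
        + ENNReal.ofReal (Real.negMulLog (lam k)) := by
    intro k
    rw [hg]
    rw [ENNReal.tsum_add]
    congr 1
    · rw [shannon_eq_negMulLog, ← ENNReal.tsum_mul_left]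
      refine tsum_congr fun n => ?_
      rw [← ENNReal.ofReal_mul (hlam k).le]
    · have : ∀ n, ENNReal.ofReal (P k n * Real.negMulLog (lam k))
          = ENNReal.ofReal (Real.negMulLog (lam k)) * ENNReal.ofReal (P k n) := by
        intro n
        rw [← ENNReal.ofReal_mul (Real.negMulLog_nonneg (hlam k).le (lam_le_one hlam hsum k)),
          mul_comm]
      rw [tsum_congr this, ENNReal.tsum_mul_left, tsum_ofReal_eq_one (hP k), mul_one]
  calc ∑' n, ENNReal.ofReal (Real.negMulLog (∑ j, lam j * P j n))
      ≤ ∑' n, ∑ k, g k n := ENNReal.tsum_le_tsum key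
    _ = ∑ k, ∑' n, g k n := (hasSum_sum fun k _ => ENNReal.summable.hasSum).tsum_eq
    _ = _ := Finset.sum_congr rfl fun k _ => hterm k

end Mixture3

section Main
variable {K : ℕ} {P : Fin K → ℕ → ℝ} {lam : Fin K → ℝ}
  (hP : ∀ k, IsProbDist (P k)) (hlam : ∀ k, 0 < lam k) (hsum : ∑ k, lam k = 1)
include hP hlam hsum

lemma mem_convRegion_mix_iff (hK : 0 < K) {α : ℝ} :
    α ∈ convRegion (fun n => ∑ k, lam k * P k n) ↔ ∀ k, α ∈ convRegion (P k) := by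
  haveI : Nonempty (Fin K) := ⟨⟨0, hK⟩⟩
  constructor
  · rintro ⟨h0, hfin⟩ k
    refine ⟨h0, ?_⟩
    by_cases h1 : α = 1
    · subst h1
      rw [renyiEntropy_lt_top_iff_one] at hfin ⊢
      exact lt_of_le_of_lt (shannon_comp_le hP hlam hsum k)
        (ENNReal.mul_lt_top ENNReal.ofReal_lt_top hfin)
    · rw [renyiEntropy_lt_top_iff h1] at hfin ⊢
      exact lt_of_le_of_lt (renyiSum_comp_le hP hlam k h0)
        (ENNReal.mul_lt_top ENNReal.ofReal_lt_top hfin)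
  · intro h
    have h0 : 0 ≤ α := (h (Classical.arbitrary _)).1
    refine ⟨h0, ?_⟩
    by_cases h1 : α = 1
    · subst h1
      rw [renyiEntropy_lt_top_iff_one]
      refine lt_of_le_of_lt (shannon_mix_le hP hlam hsum) ?_
      refine ENNReal.sum_lt_top.mpr fun k _ => ?_
      have hk := (renyiEntropy_lt_top_iff_one).mp (h k).2
      exact ENNReal.add_lt_top.mpr
        ⟨ENNReal.mul_lt_top ENNReal.ofReal_lt_top hk, ENNReal.ofReal_lt_top⟩
    · rw [renyiEntropy_lt_top_iff h1]
      refine lt_of_le_of_lt (renyiSum_mix_le hP hlam hsum hK h0) ?_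
      refine ENNReal.mul_lt_top ENNReal.ofReal_lt_top ?_
      exact ENNReal.sum_lt_top.mpr fun k _ => (renyiEntropy_lt_top_iff h1).mp (h k).2

end Main


/-- For a finite mixture `T = ∑ₖ λₖ Pₖ` of probability
distributions (with `λₖ > 0`, `∑ₖ λₖ = 1`), `α_c(T) = maxₖ α_c(Pₖ)` and
`R(T) = ⋂ₖ R(Pₖ)`. -/
theorem stmt12 (K : ℕ) (hK : 0 < K) (P : Fin K → ℕ → ℝ)
    (hP : ∀ k, IsProbDist (P k)) (lam : Fin K → ℝ)
    (hlam : ∀ k, 0 < lam k) (hsum : ∑ k, lam k = 1) :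
    criticalExponent (fun n => ∑ k, lam k * P k n)
        = ⨆ k, criticalExponent (P k) ∧
    convRegion (fun n => ∑ k, lam k * P k n) = ⋂ k, convRegion (P k) := by
  have hregion : convRegion (fun n => ∑ k, lam k * P k n) = ⋂ k, convRegion (P k) := by
    ext α
    rw [Set.mem_iInter]
    exact mem_convRegion_mix_iff hP hlam hsum hK
  refine ⟨?_, hregion⟩
  rw [criticalExponent, hregion]
  exact sInf_iInter_eq hK _ (fun k => convRegion_subset)
    (fun k => two_mem_convRegion (hP k))
    (fun k {a b} ha hab => convRegion_upward (hP k) ha hab)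
end
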